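/- arXiv:2412.00700 — 4 statements merged into one kernel-verified Lean document; each statement's English description precedes it below -/
import Mathlib

section
/- Let k, m, n be integers with k ≥ 3, m ≥ 3, and n ≥ (k-1)m + 1. Define h(s) = k(k-1)s² - (kn - 2k + 2)s + m - n. Then h(s) < 0 for every integer s with 2 ≤ s ≤ m - 1. -/
/-- h(s) = k(k-1)s² - (kn - 2k + 2)s + (m - n) -/
def h (k m n s : ℤ) : ℤ := k*(k-1)*s^2 - (k*n - 2*k + 2)*s + (m - n)

theorem stmt_2 (k m n : ℤ) (hk : 3 ≤ k) (hm : 3 ≤ m)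
    (hn : (k-1)*m + 1 ≤ n) :
    ∀ s : ℤ, 2 ≤ s → s ≤ m - 1 → h k m n s < 0 := by
  intro s h2s hsm
  have he : (0:ℤ) ≤ n - ((k-1)*m + 1) := by linarith
  have e2 : h k m n 2 < 0 := by
    unfold h
    nlinarith [mul_le_mul_of_nonneg_left hn (by linarith : (0:ℤ) ≤ 2*k),
      mul_le_mul_of_nonneg_left hm (by linarith : (0:ℤ) ≤ k-2),
      mul_le_mul_of_nonneg_left hm (by nlinarith : (0:ℤ) ≤ 2*k*(k-1)),
      mul_pos (by linarith : (0:ℤ) < k) (by linarith : (0:ℤ) < k)]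
  have em : h k m n (m-1) < 0 := by
    unfold h
    nlinarith [mul_nonneg he (by nlinarith : (0:ℤ) ≤ k*m - k + 1),
      mul_pos (mul_pos (by linarith : (0:ℤ) < k) (by linarith : (0:ℤ) < k-1))
        (by linarith : (0:ℤ) < m - 1)]
  have key : (m-3) * h k m n s
      = (m-1-s) * h k m n 2 + (s-2) * h k m n (m-1)
        - k*(k-1)*((s-2)*((m-1-s)*(m-3))) := by
    unfold h; ring
  rcases eq_or_lt_of_le h2s with rfl | hs2
  · exact e2
  · have hm3 : (0:ℤ) < m - 3 := by linarith
    have t1 : (m-1-s) * h k m n 2 ≤ 0 :=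
      mul_nonpos_of_nonneg_of_nonpos (by linarith) (le_of_lt e2)
    have t2 : (s-2) * h k m n (m-1) < 0 :=
      mul_neg_of_pos_of_neg (by linarith) em
    have t3 : (0:ℤ) ≤ k*(k-1)*((s-2)*((m-1-s)*(m-3))) := by
      apply mul_nonneg
      · nlinarith
      · apply mul_nonneg (by linarith)
        exact mul_nonneg (by linarith) (by linarith)
    have : (m-3) * h k m n s < 0 := by linarith [key]
    nlinarith [this]
end

section
/- Let k, m, n, s be integers with k ≥ 3, m ≥ 3, n ≥ (k-1)m + 1, and 2 ≤ s ≤ m - 1. Define ψ(x) = (k-2)x² - (2km + kn - 3m - n - 2ks - 2k + 2s + 2)x - kms - km + ms + m - kns - kn + ns + n + km² - m² + kmn - mn. Then ψ(m + (k-1)s) < 0. -/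
/-- ψ(x) as in the paper (integer version). -/
def psi (k m n s x : ℤ) : ℤ :=
  (k-2)*x^2 - (2*k*m + k*n - 3*m - n - 2*k*s - 2*k + 2*s + 2)*x
    - k*m*s - k*m + m*s + m - k*n*s - k*n + n*s + n + k*m^2 - m^2 + k*m*n - m*n

theorem stmt_8 (k m n s : ℤ) (hk : 3 ≤ k) (hm : 3 ≤ m)
    (hn : (k-1)*m + 1 ≤ n) (hs1 : 2 ≤ s) (hs2 : s ≤ m - 1) :
    psi k m n s (m + (k-1)*s) < 0 := by
  have h1 : psi k m n s (m + (k-1)*s)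
      = (k-1)*(k*(k-1)*s^2 - (k*n-2*k+2)*s + m - n) := by
    unfold psi; ring
  rw [h1]
  have hh : k*(k-1)*s^2 - (k*n-2*k+2)*s + m - n < 0 := by
    nlinarith [mul_le_mul_of_nonneg_right hn (by nlinarith : (0:ℤ) ≤ k*s+1),
      mul_nonneg (by linarith : (0:ℤ) ≤ m-1-s) (by linarith : (0:ℤ) ≤ k-1),
      mul_pos (by linarith : (0:ℤ) < k-1) (by linarith : (0:ℤ) < s),
      mul_pos (mul_pos (by linarith : (0:ℤ) < k-1) (by linarith : (0:ℤ) < k-1)) (by linarith : (0:ℤ) < s)]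
  nlinarith [mul_pos (by linarith : (0:ℤ) < k-1) (by linarith : (0:ℤ) < -(k*(k-1)*s^2 - (k*n-2*k+2)*s + m - n))]
end

section
/- Let G be a connected bipartite simple graph with bipartition A ∪ B, and let f : A → ℤ with f(v) ≥ 2 for all v ∈ A. If G contains a spanning tree T such that d_T(v) ≥ f(v) for all v ∈ A, then for every nonempty S ⊆ A, |N_G(S)| ≥ Σ_{v∈S} f(v) - |S| + 1. -/
open SimpleGraph

lemma concat_isPath {V : Type*} {G : SimpleGraph V} {u v w : V} (p : G.Walk u v)
    (h : G.Adj v w) (hp : p.IsPath) (hw : w ∉ p.support) : (p.concat h).IsPath := by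
  rw [Walk.isPath_def, Walk.support_concat, List.nodup_append]
  refine ⟨hp.support_nodup, by simp, by rintro a ha b hb rfl; rw [List.mem_singleton] at hb; exact hw (hb ▸ ha)⟩

lemma parity_lemma {V : Type*} {T : SimpleGraph V} {A : Set V}
    (hopp : ∀ {x y : V}, T.Adj x y → (x ∈ A ↔ y ∉ A)) :
    ∀ {u v : V} (w : T.Walk u v), ((u ∈ A ↔ v ∈ A) ↔ Even w.length) := by
  intro u v w
  induction w with
  | nil => simp
  | cons h p ih =>
    have h2 := hopp h
    rw [Walk.length_cons, Nat.even_add_one, ← ih]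
    tauto

lemma dist_succ {V : Type*} {T : SimpleGraph V} {A : Set V} (hTconn : T.Connected)
    (hopp : ∀ {x y : V}, T.Adj x y → (x ∈ A ↔ y ∉ A)) (r : V) {x y : V} (hxy : T.Adj x y) :
    T.dist r x = T.dist r y + 1 ∨ T.dist r y = T.dist r x + 1 := by
  have hne : T.dist r x ≠ T.dist r y := by
    intro h
    obtain ⟨w1, hw1⟩ := (hTconn r x).exists_walk_length_eq_dist
    obtain ⟨w2, hw2⟩ := (hTconn r y).exists_walk_length_eq_dist
    have p1 := parity_lemma hopp w1
    have p2 := parity_lemma hopp w2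
    rw [hw1] at p1
    rw [hw2, ← h] at p2
    have := hopp hxy
    tauto
  have h1 : T.dist r y ≤ T.dist r x + 1 := by
    have := hTconn.dist_triangle (u := r) (v := x) (w := y)
    rwa [(dist_eq_one_iff_adj).2 hxy] at this
  have h2 : T.dist r x ≤ T.dist r y + 1 := by
    have := hTconn.dist_triangle (u := r) (v := y) (w := x)
    rwa [(dist_eq_one_iff_adj).2 hxy.symm] at this
  omega

lemma unique_lower {V : Type*} [DecidableEq V] {T : SimpleGraph V} (hTconn : T.Connected)
    (hTacyc : T.IsAcyclic) (r x y1 y2 : V) (h1 : T.Adj y1 x) (h2 : T.Adj y2 x)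
    (hd1 : T.dist r x = T.dist r y1 + 1) (hd2 : T.dist r x = T.dist r y2 + 1) :
    y1 = y2 := by
  by_contra hne
  obtain ⟨w1, hw1⟩ := (hTconn r y1).exists_walk_length_eq_dist
  obtain ⟨w2, hw2⟩ := (hTconn r y2).exists_walk_length_eq_dist
  have hx1 : x ∉ w1.support := by
    intro hx
    have := w1.length_takeUntil_le hx
    have := SimpleGraph.dist_le (w1.takeUntil x hx)
    omega
  have hx2 : x ∉ w2.support := by
    intro hx
    have := w2.length_takeUntil_le hx
    have := SimpleGraph.dist_le (w2.takeUntil x hx)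
    omega
  have hp1 : (w1.concat h1).IsPath :=
    concat_isPath w1 h1 (w1.isPath_of_length_eq_dist hw1) hx1
  have hp2 : (w2.concat h2).IsPath :=
    concat_isPath w2 h2 (w2.isPath_of_length_eq_dist hw2) hx2
  have := hTacyc.path_unique ⟨w1.concat h1, hp1⟩ ⟨w2.concat h2, hp2⟩
  have heq : (w1.concat h1).edges = (w2.concat h2).edges := by
    rw [Subtype.ext_iff] at this
    exact congrArg Walk.edges this
  rw [Walk.edges_concat, Walk.edges_concat] at heq
  have hlast : s(y1, x) = s(y2, x) := by
    have := congrArg List.getLast? heq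
    simpa using this
  rw [Sym2.eq_iff] at hlast
  rcases hlast with ⟨h, -⟩ | ⟨h, h'⟩
  · exact hne h
  · subst h h'; exact h1.ne rfl

lemma forest_card_le {V : Type*} [Fintype V] [DecidableEq V] {T : SimpleGraph V}
    (hTconn : T.Connected) (hTacyc : T.IsAcyclic) {A : Set V}
    (hopp : ∀ {x y : V}, T.Adj x y → (x ∈ A ↔ y ∉ A)) (r : V)
    (F : Finset (Sym2 V)) (hFE : ∀ e ∈ F, e ∈ T.edgeSet)
    (U : Finset V) (hU : ∀ e ∈ F, ∀ x ∈ e, x ∈ U) (hr : r ∈ U) :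
    F.card ≤ (U.erase r).card := by
  classical
  set P : Sym2 V → Prop := fun e => ∃ x y, e = s(x, y) ∧ T.dist r y < T.dist r x with hPdef
  set φ : Sym2 V → V := fun e => if h : P e then h.choose else r with hφdef
  have hφ : ∀ x y : V, T.Adj x y → T.dist r y < T.dist r x → φ s(x, y) = x := by
    intro x y hadj hlt
    have hP : P s(x, y) := ⟨x, y, rfl, hlt⟩
    have h0 : φ s(x, y) = hP.choose := by simp only [hφdef]; exact dif_pos hP
    obtain ⟨y', he, hlt'⟩ := hP.choose_spec
    rw [h0]
    rw [Sym2.eq_iff] at he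
    rcases he with ⟨h1, h2⟩ | ⟨h1, h2⟩
    · exact h1.symm
    · rw [← h2] at hlt' h0 ⊢; rw [← h1] at hlt'; omega
  have key : ∀ e ∈ F, ∃ x y, e = s(x, y) ∧ T.Adj x y ∧ T.dist r x = T.dist r y + 1 := by
    intro e he
    have hE := hFE e he
    induction e using Sym2.ind with
    | _ a b =>
      rw [SimpleGraph.mem_edgeSet] at hE
      rcases dist_succ hTconn hopp r hE with h | h
      · exact ⟨a, b, rfl, hE, h⟩
      · exact ⟨b, a, Sym2.eq_swap.symm, hE.symm, h⟩
  apply Finset.card_le_card_of_injOn φ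
  · intro e he
    obtain ⟨x, y, rfl, hadj, hd⟩ := key e he
    rw [hφ x y hadj (by omega)]
    refine Finset.mem_erase.2 ⟨?_, hU _ he x (Sym2.mem_mk_left x y)⟩
    intro hxr
    subst hxr
    rw [SimpleGraph.dist_self] at hd
    omega
  · intro e1 he1 e2 he2 heq
    obtain ⟨x1, y1, rfl, hadj1, hd1⟩ := key e1 he1
    obtain ⟨x2, y2, rfl, hadj2, hd2⟩ := key e2 he2
    rw [hφ x1 y1 hadj1 (by omega), hφ x2 y2 hadj2 (by omega)] at heq
    subst heq
    have := unique_lower hTconn hTacyc r x1 y1 y2 hadj1.symm hadj2.symm hd1 hd2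
    subst this
    rfl


theorem stmt_15 {V : Type*} [Fintype V] (G : SimpleGraph V) (hconn : G.Connected)
    (A B : Set V)
    (hpart : ∀ v, (v ∈ A ∧ v ∉ B) ∨ (v ∈ B ∧ v ∉ A))
    (hbip : ∀ u v, G.Adj u v → (u ∈ A ∧ v ∈ B) ∨ (u ∈ B ∧ v ∈ A))
    (f : V → ℤ) (hf : ∀ v ∈ A, 2 ≤ f v)
    (T : SimpleGraph V) (hTG : T ≤ G) (hTconn : T.Connected) (hTacyc : T.IsAcyclic)
    (hdeg : ∀ v ∈ A, f v ≤ ((T.neighborSet v).ncard : ℤ)) :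
    ∀ S : Finset V, ↑S ⊆ A → S.Nonempty →
      (∑ v ∈ S, f v) - S.card + 1 ≤ (({u | ∃ v ∈ S, G.Adj v u} : Set V).ncard : ℤ) := by

  classical
  intro S hSA hSne
  obtain ⟨r, hrS⟩ := hSne
  have hopp : ∀ {x y : V}, T.Adj x y → (x ∈ A ↔ y ∉ A) := by
    intro x y hxy
    have h1 := hpart x; have h2 := hpart y
    rcases hbip x y (hTG hxy) with ⟨hx, hy⟩ | ⟨hx, hy⟩ <;> tauto
  have hindep : ∀ v ∈ S, ∀ u ∈ S, ¬ T.Adj v u := by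
    intro v hv u hu hadj
    exact ((hopp hadj).1 (hSA hv)) (hSA hu)
  set NF : Finset V := Finset.univ.filter (fun u => ∃ v ∈ S, G.Adj v u) with hNF
  have hNcard : (({u | ∃ v ∈ S, G.Adj v u} : Set V).ncard) = NF.card := by
    rw [Set.ncard_eq_toFinset_card']
    congr 1
    ext u; simp [hNF]
  set F : Finset (Sym2 V) := T.edgeFinset.filter (fun e => ∃ v ∈ S, v ∈ e) with hF
  have hsum : ∑ v ∈ S, (T.neighborSet v).toFinset.card = F.card := by
    rw [← Finset.card_sigma]
    apply Finset.card_bij (fun p _ => s(p.1, p.2))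
    · rintro ⟨v, u⟩ hp
      rw [Finset.mem_sigma, Set.mem_toFinset] at hp
      obtain ⟨hv, hu⟩ := hp
      refine Finset.mem_filter.2 ⟨?_, v, hv, Sym2.mem_mk_left v u⟩
      rw [SimpleGraph.mem_edgeFinset, SimpleGraph.mem_edgeSet]; exact hu
    · rintro ⟨v1, u1⟩ h1 ⟨v2, u2⟩ h2 heq
      rw [Finset.mem_sigma, Set.mem_toFinset] at h1 h2
      rw [Sym2.eq_iff] at heq
      rcases heq with ⟨rfl, rfl⟩ | ⟨ha, hb⟩
      · rfl
      · exact absurd h2.2 (hindep _ h2.1 _ (ha ▸ h1.1))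
    · intro e he
      rw [hF, Finset.mem_filter, SimpleGraph.mem_edgeFinset] at he
      obtain ⟨heE, v, hv, hve⟩ := he
      induction e using Sym2.ind with
      | _ a b =>
        rw [SimpleGraph.mem_edgeSet] at heE
        rw [Sym2.mem_iff] at hve
        rcases hve with rfl | rfl
        · exact ⟨⟨v, b⟩, Finset.mem_sigma.2 ⟨hv, Set.mem_toFinset.2 heE⟩, rfl⟩
        · exact ⟨⟨v, a⟩, Finset.mem_sigma.2 ⟨hv, Set.mem_toFinset.2 heE.symm⟩, Sym2.eq_swap⟩
  have hFE : ∀ e ∈ F, e ∈ T.edgeSet := by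
    intro e he
    rw [hF, Finset.mem_filter, SimpleGraph.mem_edgeFinset] at he
    exact he.1
  have hU : ∀ e ∈ F, ∀ x ∈ e, x ∈ S ∪ NF := by
    intro e he
    rw [hF, Finset.mem_filter, SimpleGraph.mem_edgeFinset] at he
    obtain ⟨heE, v, hv, hve⟩ := he
    induction e using Sym2.ind with
    | _ a b =>
      rw [SimpleGraph.mem_edgeSet] at heE
      rw [Sym2.mem_iff] at hve
      intro x hx
      rw [Sym2.mem_iff] at hx
      have hmemNF : ∀ w u : V, w ∈ S → G.Adj w u → u ∈ S ∪ NF := by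
        intro w u hw hadj
        exact Finset.mem_union_right _ (Finset.mem_filter.2 ⟨Finset.mem_univ u, w, hw, hadj⟩)
      rcases hve with rfl | rfl <;> rcases hx with rfl | rfl
      · exact Finset.mem_union_left _ hv
      · exact hmemNF v x hv (hTG heE)
      · exact hmemNF v x hv (hTG heE.symm)
      · exact Finset.mem_union_left _ hv
  have hbound : F.card ≤ ((S ∪ NF).erase r).card :=
    forest_card_le hTconn hTacyc hopp r F hFE (S ∪ NF) hU (Finset.mem_union_left _ hrS)
  have hdisj : Disjoint S NF := by
    rw [Finset.disjoint_left]
    intro u hu hu2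
    rw [hNF, Finset.mem_filter] at hu2
    obtain ⟨-, v, hv, hadj⟩ := hu2
    have h1 := hpart v; have h2 := hpart u
    have h3 := hSA hv; have h4 := hSA hu
    rcases hbip v u hadj with ⟨hx, hy⟩ | ⟨hx, hy⟩ <;> tauto
  have hUcard : (S ∪ NF).card = S.card + NF.card := Finset.card_union_of_disjoint hdisj
  have herase : ((S ∪ NF).erase r).card = (S ∪ NF).card - 1 :=
    Finset.card_erase_of_mem (Finset.mem_union_left _ hrS)
  have h1le : 1 ≤ (S ∪ NF).card :=
    Finset.card_pos.2 ⟨r, Finset.mem_union_left _ hrS⟩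
  have hnat : F.card + 1 ≤ S.card + NF.card := by omega
  have hfsum : ∑ v ∈ S, f v ≤ (F.card : ℤ) := by
    calc ∑ v ∈ S, f v ≤ ∑ v ∈ S, ((T.neighborSet v).ncard : ℤ) :=
          Finset.sum_le_sum (fun v hv => hdeg v (hSA hv))
      _ = ((∑ v ∈ S, (T.neighborSet v).toFinset.card : ℕ) : ℤ) := by
          push_cast
          exact Finset.sum_congr rfl fun v _ => by rw [Set.ncard_eq_toFinset_card']
      _ = (F.card : ℤ) := by rw [hsum]
  rw [hNcard]
  have := hnat
  push_cast at this ⊢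
  linarith
end

section
/- Let k, m, n, s be integers with k ≥ 3, m ≥ 3, n ≥ (k-1)m + 1, and 2 ≤ s ≤ m - 1, and let q₁ be a real number with m + (k-1)s < q₁ < m + n. Define φ*(x) = x⁴ - (2m + n + k - 2)x³ + (m² + mn + 2km + kn - 3m - n - 2k + 2)x² + (km - m + kn - n - km² + m² - kmn + mn)x and φ₁(x) = x⁴ - (2m + n + ks - 2s)x³ + (m² + mn + 2kms + kns - 3ms - ns - 2ks² + 2s²)x² + (kms² - ms² + kns² - ns² - km²s + m²s - kmns + mns)x. If φ₁(q₁) = 0, then φ*(q₁) < 0. -/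
/-- φ₁, the characteristic polynomial of the quotient matrix B₁. -/
def phi1 (k m n s x : ℝ) : ℝ :=
  x^4 - (2*m + n + k*s - 2*s)*x^3
    + (m^2 + m*n + 2*k*m*s + k*n*s - 3*m*s - n*s - 2*k*s^2 + 2*s^2)*x^2
    + (k*m*s^2 - m*s^2 + k*n*s^2 - n*s^2 - k*m^2*s + m^2*s - k*m*n*s + m*n*s)*x

/-- φ*, the characteristic polynomial of the quotient matrix B*. -/
def phiStar (k m n x : ℝ) : ℝ :=
  x^4 - (2*m + n + k - 2)*x^3
    + (m^2 + m*n + 2*k*m + k*n - 3*m - n - 2*k + 2)*x^2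
    + (k*m - m + k*n - n - k*m^2 + m^2 - k*m*n + m*n)*x

set_option maxHeartbeats 1000000 in
theorem stmt_19 (k m n s : ℤ) (hk : 3 ≤ k) (hm : 3 ≤ m)
    (hn : (k-1)*m + 1 ≤ n) (hs1 : 2 ≤ s) (hs2 : s ≤ m - 1)
    (q1 : ℝ) (hq1l : (m : ℝ) + (k-1)*s < q1) (hq1u : q1 < (m : ℝ) + n)
    (hroot : phi1 k m n s q1 = 0) :
    phiStar k m n q1 < 0 := by
  have hK : (3:ℝ) ≤ (k:ℝ) := by exact_mod_cast hk
  have hM : (3:ℝ) ≤ (m:ℝ) := by exact_mod_cast hm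
  have hN : ((k:ℝ)-1)*(m:ℝ) + 1 ≤ (n:ℝ) := by exact_mod_cast hn
  have hS1 : (2:ℝ) ≤ (s:ℝ) := by exact_mod_cast hs1
  have hS2 : (s:ℝ) ≤ (m:ℝ) - 1 := by exact_mod_cast hs2
  set K := (k:ℝ); set M := (m:ℝ); set N := (n:ℝ); set S := (s:ℝ)
  set ψ : ℝ → ℝ := fun x => (K-2)*x^2 - (2*K*M+K*N-3*M-N-2*K*S-2*K+2*S+2)*x
    - (K*M*S+K*M-M*S-M+K*N*S+K*N-N*S-N-K*M^2+M^2-K*M*N+M*N) with hψdef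
  have key : phiStar K M N q1 = q1*(S-1)*ψ q1 := by
    simp only [phiStar, phi1, hψdef] at hroot ⊢
    linear_combination hroot
  have ha : ψ (M+(K-1)*S) < 0 := by
    have hks : (0:ℝ) ≤ K*S+1 := by
      nlinarith [mul_nonneg (show (0:ℝ) ≤ K by linarith) (show (0:ℝ) ≤ S by linarith)]
    have hbr : S^2*K*(K-1) + 2*S*(K-1) + M - N*(K*S+1) < 0 := by
      nlinarith [mul_nonneg (sub_nonneg.2 hN) hks,
        mul_nonneg (show (0:ℝ) ≤ M-(S+1) by linarith)
          (mul_nonneg (mul_nonneg (by linarith : (0:ℝ) ≤ K-1) (by linarith : (0:ℝ) ≤ K)) (by linarith : (0:ℝ) ≤ S))]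
    have hfac : ψ (M+(K-1)*S)
        = (K-1) * (S^2*K*(K-1) + 2*S*(K-1) + M - N*(K*S+1)) := by
      simp only [hψdef]; ring
    rw [hfac]
    exact mul_neg_of_pos_of_neg (by linarith) hbr
  have hb : ψ (M+N) < 0 := by
    simp only [hψdef]
    have h1 : (K-1)*(S+1) < N := by nlinarith
    nlinarith [mul_pos (show (0:ℝ) < M+N by nlinarith) (sub_pos.2 h1)]
  have hq : ψ q1 < 0 := by
    have hid : ((M+N)-(M+(K-1)*S))*ψ q1
        = ((M+N)-q1)*ψ (M+(K-1)*S) + (q1-(M+(K-1)*S))*ψ (M+N)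
          - (K-2)*(q1-(M+(K-1)*S))*((M+N)-q1)*((M+N)-(M+(K-1)*S)) := by
      simp only [hψdef]; ring
    nlinarith [mul_pos (sub_pos.2 hq1l) (sub_pos.2 hq1u),
      mul_pos (sub_pos.2 hq1u) (neg_pos.2 ha), mul_pos (sub_pos.2 hq1l) (neg_pos.2 hb),
      mul_pos (mul_pos (show (0:ℝ) < K-2 by linarith) (sub_pos.2 hq1l)) (sub_pos.2 hq1u),
      sub_pos.2 (lt_trans hq1l hq1u)]
  have hq1pos : 0 < q1 := by
    linarith [mul_nonneg (show (0:ℝ) ≤ K-1 by linarith) (show (0:ℝ) ≤ S by linarith)]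
  calc phiStar K M N q1 = q1*(S-1)*ψ q1 := key
    _ < 0 := mul_neg_of_pos_of_neg (by nlinarith) hq
end
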